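/- If x is a random variable with standard Gaussian distribution N(0,1) and f : ℝ → ℝ is Lipschitz continuous, then the random variable f(x) is sub-gaussian; moreover its sub-gaussian norm satisfies ‖f(x) − E[f(x)]‖_{ψ₂} ≤ C·K, where K is the Lipschitz constant of f and C is an absolute constant. -/

import Mathlib

open MeasureTheory ProbabilityTheory

section SGAux


open MeasureTheory ProbabilityTheory Real

lemma sg_integral_eq (g : ℝ → ℝ) :
    ∫ x, g x ∂(gaussianReal 0 1) = ∫ x, gaussianPDFReal 0 1 x * g x := by
  rw [gaussianReal_of_var_ne_zero 0 one_ne_zero]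
  have h : gaussianPDF 0 1 = fun x => ((gaussianPDFReal 0 1 x).toNNReal : ENNReal) := rfl
  rw [h, integral_withDensity_eq_integral_smul ((measurable_gaussianPDFReal 0 1).real_toNNReal) g]
  congr 1; ext x
  rw [NNReal.smul_def, smul_eq_mul, Real.coe_toNNReal _ (gaussianPDFReal_nonneg 0 1 x)]

lemma sg_integrable_iff (g : ℝ → ℝ) :
    Integrable g (gaussianReal 0 1) ↔ Integrable (fun x => gaussianPDFReal 0 1 x * g x) := by
  rw [gaussianReal_of_var_ne_zero 0 one_ne_zero]
  have h : gaussianPDF 0 1 = fun x => ((gaussianPDFReal 0 1 x).toNNReal : ENNReal) := rfl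
  rw [h, integrable_withDensity_iff_integrable_smul ((measurable_gaussianPDFReal 0 1).real_toNNReal)]
  constructor <;> intro hh <;> [skip; skip] <;>
  · refine hh.congr (Filter.Eventually.of_forall fun x => ?_)
    simp [NNReal.smul_def, Real.coe_toNNReal _ (gaussianPDFReal_nonneg 0 1 x)]

lemma sg_pdf_mul_exp (x : ℝ) :
    gaussianPDFReal 0 1 x * Real.exp (x ^ 2 / 4)
      = (Real.sqrt (2 * π))⁻¹ * Real.exp (-(4⁻¹ : ℝ) * x ^ 2) := by
  rw [gaussianPDFReal]
  push_cast
  rw [mul_assoc, ← Real.exp_add]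
  ring_nf

lemma sg_integrable_exp : Integrable (fun x => Real.exp (x ^ 2 / 4)) (gaussianReal 0 1) := by
  rw [sg_integrable_iff]
  refine (Integrable.congr ?_ (Filter.Eventually.of_forall fun x => (sg_pdf_mul_exp x).symm))
  exact (integrable_exp_neg_mul_sq (by norm_num : (0:ℝ) < 4⁻¹)).const_mul _

lemma sg_integral_exp : ∫ x, Real.exp (x ^ 2 / 4) ∂(gaussianReal 0 1) = Real.sqrt 2 := by
  rw [sg_integral_eq]
  calc ∫ x, gaussianPDFReal 0 1 x * Real.exp (x ^ 2 / 4)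
      = ∫ x, (Real.sqrt (2 * π))⁻¹ * Real.exp (-(4⁻¹:ℝ) * x ^ 2) := by
        congr 1; ext x; exact sg_pdf_mul_exp x
    _ = (Real.sqrt (2 * π))⁻¹ * Real.sqrt (π / 4⁻¹) := by
        rw [MeasureTheory.integral_const_mul, integral_gaussian]
    _ = Real.sqrt 2 := by
        have hd : (π / 4⁻¹ : ℝ) = 4 * π := by field_simp
        rw [hd, Real.sqrt_mul (by norm_num : (0:ℝ) ≤ 4),
          Real.sqrt_mul (by norm_num : (0:ℝ) ≤ 2)]
        have h4 : Real.sqrt 4 = 2 := by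
          rw [show (4:ℝ) = 2^2 by norm_num, Real.sqrt_sq (by norm_num : (0:ℝ) ≤ 2)]
        have hπ : 0 < Real.sqrt π := Real.sqrt_pos.mpr Real.pi_pos
        have h2 : 0 < Real.sqrt 2 := Real.sqrt_pos.mpr (by norm_num)
        rw [h4, mul_inv]
        field_simp
        nlinarith [Real.sq_sqrt (by norm_num : (0:ℝ) ≤ 2)]

lemma sg_abs_le (y : ℝ) : |y| ≤ Real.exp (y ^ 2 / 4) := by
  have h := Real.add_one_le_exp (y ^ 2 / 4)
  nlinarith [sq_nonneg (|y| - 2), sq_abs y]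

lemma sg_key (X : ℝ → ℝ) (t : ℝ) (h : ∀ x, X x ^ 2 / t ^ 2 ≤ 1 / 4 + x ^ 2 / 4) :
    ∫ x, Real.exp (X x ^ 2 / t ^ 2) ∂(gaussianReal 0 1) ≤ 2 := by
  have hint : Integrable (fun x => Real.exp (1 / 4) * Real.exp (x ^ 2 / 4)) (gaussianReal 0 1) :=
    sg_integrable_exp.const_mul _
  have hs2 : Real.sqrt 2 ^ 2 = 2 := Real.sq_sqrt (by norm_num)
  have hlt : Real.exp (1 / 4 : ℝ) < Real.sqrt 2 := by
    have h1 : Real.exp (1 / 4 : ℝ) ^ 4 = Real.exp 1 := by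
      rw [show Real.exp (1/4:ℝ) ^ 4 = Real.exp (1/4:ℝ) ^ (4:ℕ) by norm_num, ← Real.exp_nat_mul]
      norm_num
    have ha2 : Real.exp (1 / 4 : ℝ) ^ 2 < 2 := by
      nlinarith [Real.exp_one_lt_d9, Real.exp_pos (1 / 4 : ℝ),
        sq_nonneg (Real.exp (1 / 4 : ℝ) ^ 2 - 2)]
    nlinarith [Real.exp_pos (1 / 4 : ℝ), Real.sqrt_nonneg 2,
      sq_nonneg (Real.exp (1 / 4 : ℝ) - Real.sqrt 2)]
  calc ∫ x, Real.exp (X x ^ 2 / t ^ 2) ∂(gaussianReal 0 1)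
      ≤ ∫ x, Real.exp (1 / 4) * Real.exp (x ^ 2 / 4) ∂(gaussianReal 0 1) := by
        refine integral_mono_of_nonneg (ae_of_all _ fun x => (Real.exp_pos _).le) hint
          (ae_of_all _ fun x => ?_)
        dsimp only
        rw [← Real.exp_add]
        exact Real.exp_le_exp.mpr (by linarith [h x])
    _ = Real.exp (1 / 4) * Real.sqrt 2 := by rw [integral_const_mul, sg_integral_exp]
    _ ≤ 2 := by nlinarith [Real.exp_pos (1 / 4 : ℝ), Real.sqrt_nonneg 2]


end SGAux


/-- The sub-gaussian (ψ₂, Orlicz) norm of a real random variable: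
`‖X‖_{ψ₂} = inf { t > 0 : E[exp(X²/t²)] ≤ 2 }`. -/
noncomputable def subgaussianNorm {Ω : Type*} [MeasurableSpace Ω]
    (P : Measure Ω) (X : Ω → ℝ) : ℝ :=
  sInf {t : ℝ | 0 < t ∧ (∫ ω, Real.exp (X ω ^ 2 / t ^ 2) ∂P) ≤ 2}

/-- A real random variable is sub-gaussian if its ψ₂ norm is finite, i.e. some
`t > 0` satisfies `E[exp(X²/t²)] ≤ 2`. -/
def SubGaussian {Ω : Type*} [MeasurableSpace Ω] (P : Measure Ω) (X : Ω → ℝ) : Prop :=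
  ∃ t : ℝ, 0 < t ∧ (∫ ω, Real.exp (X ω ^ 2 / t ^ 2) ∂P) ≤ 2

/-- **Lemma 1.** If `x ∼ N(0,1)` and `f : ℝ → ℝ` is Lipschitz with constant `K`, then
`f(x)` is sub-gaussian and moreover `‖f(x) − E[f(x)]‖_{ψ₂} ≤ C·K` for an absolute
constant `C > 0`. -/
theorem statement5 :
    ∃ C : ℝ, 0 < C ∧ ∀ (f : ℝ → ℝ) (K : NNReal), LipschitzWith K f →
      SubGaussian (gaussianReal 0 1) f ∧
      subgaussianNorm (gaussianReal 0 1)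
        (fun x => f x - ∫ y, f y ∂(gaussianReal 0 1)) ≤ C * (K : ℝ) := by
  refine ⟨4, by norm_num, fun f K hf => ?_⟩
  have hfx : ∀ x y : ℝ, |f x - f y| ≤ (K : ℝ) * |x - y| := fun x y => by
    have h := hf.dist_le_mul x y
    rwa [Real.dist_eq, Real.dist_eq] at h
  constructor
  · -- SubGaussian
    set t := Real.sqrt (8 * f 0 ^ 2 + 8 * (K : ℝ) ^ 2 + 1) with ht_def
    have ht : 0 < t := Real.sqrt_pos.mpr (by positivity)
    have ht2 : t ^ 2 = 8 * f 0 ^ 2 + 8 * (K : ℝ) ^ 2 + 1 := Real.sq_sqrt (by positivity)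
    refine ⟨t, ht, sg_key f t fun x => ?_⟩
    rw [div_le_iff₀ (by positivity)]
    have h1 : |f x - f 0| ≤ (K : ℝ) * |x| := by simpa using hfx x 0
    have h1' : (f x - f 0) ^ 2 ≤ (K : ℝ) ^ 2 * x ^ 2 := by
      have h2 := mul_le_mul h1 h1 (abs_nonneg _) (by positivity)
      nlinarith [sq_abs (f x - f 0), sq_abs x]
    nlinarith [h1', sq_nonneg (f x - 2 * f 0), sq_nonneg x, sq_nonneg (f 0),
      sq_nonneg ((K : ℝ)), mul_nonneg (sq_nonneg ((K : ℝ))) (sq_nonneg x),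
      mul_nonneg (sq_nonneg (f 0)) (sq_nonneg x)]
  · -- norm bound
    set m := ∫ y, f y ∂(gaussianReal 0 1) with hm_def
    by_cases hK : K = 0
    · subst hK
      have hconst : ∀ x, f x = f 0 := fun x => by
        have h := hfx x 0
        simp only [NNReal.coe_zero, zero_mul] at h
        have := abs_nonneg (f x - f 0)
        have h0 : |f x - f 0| = 0 := le_antisymm h this
        have := abs_eq_zero.mp h0
        linarith
      have hm : m = f 0 := by
        rw [hm_def, show (fun y => f y) = fun _ : ℝ => f 0 from funext hconst,
          integral_const]
        simp
      have hval : ∀ t : ℝ, (∫ ω, Real.exp ((fun x => f x - m) ω ^ 2 / t ^ 2)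
          ∂(gaussianReal 0 1)) = 1 := fun t => by
        have he : (fun ω => Real.exp ((fun x => f x - m) ω ^ 2 / t ^ 2))
            = fun _ : ℝ => 1 := funext fun ω => by
          simp [hconst ω, hm]
        rw [he, integral_const]
        simp
      have hset : {t : ℝ | 0 < t ∧ (∫ ω, Real.exp ((fun x => f x - m) ω ^ 2 / t ^ 2)
          ∂(gaussianReal 0 1)) ≤ 2} = Set.Ioi 0 := by
        ext t
        simp [hval t]
      rw [subgaussianNorm, hset, csInf_Ioi]
      simp
    · have hKpos : (0 : ℝ) < (K : ℝ) := by
        exact_mod_cast lt_of_le_of_ne (zero_le : (0:NNReal) ≤ K) (Ne.symm hK)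
      have hfi : Integrable f (gaussianReal 0 1) := by
        refine Integrable.mono' ((integrable_const |f 0|).add
          (sg_integrable_exp.const_mul (K : ℝ))) hf.continuous.aestronglyMeasurable
          (ae_of_all _ fun x => ?_)
        have h1 : |f x - f 0| ≤ (K : ℝ) * |x| := by simpa using hfx x 0
        have h2 := sg_abs_le x
        have : |f x| ≤ |f 0| + |f x - f 0| := by
          calc |f x| = |f 0 + (f x - f 0)| := by ring_nf
            _ ≤ |f 0| + |f x - f 0| := abs_add_le _ _
        simp only [Real.norm_eq_abs, Pi.add_apply]
        nlinarith
      have hm0 : |f 0 - m| ≤ Real.sqrt 2 * (K : ℝ) := by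
        have h1 : f 0 - m = ∫ y, (f 0 - f y) ∂(gaussianReal 0 1) := by
          rw [integral_sub (integrable_const (f 0)) hfi, integral_const]
          simp [hm_def]
        rw [h1]
        calc |∫ y, (f 0 - f y) ∂(gaussianReal 0 1)|
            ≤ ∫ y, |f 0 - f y| ∂(gaussianReal 0 1) := by
              simpa [Real.norm_eq_abs] using
                norm_integral_le_integral_norm (μ := gaussianReal 0 1) (fun y => f 0 - f y)
          _ ≤ ∫ y, (K : ℝ) * Real.exp (y ^ 2 / 4) ∂(gaussianReal 0 1) := by
              refine integral_mono_of_nonneg (ae_of_all _ fun y => abs_nonneg _)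
                (sg_integrable_exp.const_mul _) (ae_of_all _ fun y => ?_)
              have h2 : |f 0 - f y| ≤ (K : ℝ) * |y| := by simpa [abs_sub_comm] using hfx y 0
              have h3 := sg_abs_le y
              nlinarith [abs_nonneg y]
          _ = Real.sqrt 2 * (K : ℝ) := by
              rw [integral_const_mul, sg_integral_exp]; ring
      have hmem : (4 * (K : ℝ)) ∈ {t : ℝ | 0 < t ∧ (∫ ω, Real.exp ((fun x => f x - m) ω ^ 2 / t ^ 2)
          ∂(gaussianReal 0 1)) ≤ 2} := by
        refine ⟨by positivity, sg_key (fun x => f x - m) (4 * (K : ℝ)) fun x => ?_⟩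
        rw [div_le_iff₀ (by positivity)]
        have hs15 : Real.sqrt 2 ≤ 1.5 := by
          nlinarith [sq_nonneg (Real.sqrt 2 - 1.5), Real.sq_sqrt (show (0:ℝ) ≤ 2 by norm_num)]
        have habs : |f x - m| ≤ (K : ℝ) * |x| + 1.5 * (K : ℝ) := by
          calc |f x - m| ≤ |f x - f 0| + |f 0 - m| := abs_sub_le _ _ _
            _ ≤ (K : ℝ) * |x| + 1.5 * (K : ℝ) := by
                have := hfx x 0; simp at this
                nlinarith [hm0, hKpos]
        have hsq : (f x - m) ^ 2 ≤ ((K : ℝ) * |x| + 1.5 * (K : ℝ)) ^ 2 := by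
          have h2 := mul_le_mul habs habs (abs_nonneg _) (by positivity)
          nlinarith [sq_abs (f x - m)]
        nlinarith [hsq, sq_abs x,
          mul_nonneg (mul_pos hKpos hKpos).le (sq_nonneg (|x| - 1/2)),
          mul_nonneg (mul_pos hKpos hKpos).le (sq_nonneg x)]
      exact csInf_le ⟨0, fun t ht => ht.1.le⟩ hmem
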